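/- Let K_1, K_2 be convex bodies in ℝ^n, each admitting at least one periodic billiard trajectory. Then every periodic billiard trajectory on the Minkowski sum K_1 + K_2 has length ≥ μ_P(K_1) + μ_P(K_2). -/

import Mathlib

open scoped RealInnerProductSpace Pointwise
open Metric

noncomputable section

/-- Euclidean space ℝ^n. -/
abbrev Euc (n : ℕ) := EuclideanSpace ℝ (Fin n)

/-- The image of a closed polygon with vertices `q 0, …, q (m-1)` (indices mod `m`):
the union of the segments `[q i, q (i+1)]`. -/
def polyImage {n m : ℕ} [NeZero m] (q : Fin m → Euc n) : Set (Euc n) :=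
  ⋃ i : Fin m, segment ℝ (q i) (q (i + 1))

/-- The length of a closed polygon: `∑ i, ‖q (i+1) - q i‖`. -/
noncomputable def polyLength {n m : ℕ} [NeZero m] (q : Fin m → Euc n) : ℝ :=
  ∑ i : Fin m, ‖q (i + 1) - q i‖

/-- A convex body: a compact convex set with nonempty interior. -/
def IsConvexBody {n : ℕ} (K : Set (Euc n)) : Prop :=
  IsCompact K ∧ Convex ℝ K ∧ (interior K).Nonempty

/-- A closed polygon belongs to `𝒫⁺(K)` if no translate of its image is contained
in the interior of `K`. -/
def InPPlus {n m : ℕ} [NeZero m] (K : Set (Euc n)) (q : Fin m → Euc n) : Prop :=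
  ∀ x : Euc n, ¬ ((fun p => p + x) '' polyImage q ⊆ interior K)

/-- Unit direction of the `i`-th edge of a closed polygon. -/
noncomputable def dir {n m : ℕ} [NeZero m] (q : Fin m → Euc n) (i : Fin m) : Euc n :=
  ‖q (i + 1) - q i‖⁻¹ • (q (i + 1) - q i)

/-- Outer normal `ν i = u (i-1) - u i` at the `i`-th vertex. -/
noncomputable def normalVec {n m : ℕ} [NeZero m] (q : Fin m → Euc n) (i : Fin m) : Euc n :=
  dir q (i - 1) - dir q i

/-- A periodic billiard trajectory on a convex body `K`. -/
def IsBilliard {n m : ℕ} [NeZero m] (K : Set (Euc n)) (q : Fin m → Euc n) : Prop :=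
  2 ≤ m ∧ (∀ i, q (i + 1) ≠ q i) ∧ (∀ i, q i ∈ K) ∧
    ∀ i, normalVec q i ≠ 0 ∧ ∀ x ∈ K, ⟪x - q i, normalVec q i⟫ ≤ 0

/-- The infimum of lengths of periodic billiard trajectories on `K`. -/
noncomputable def muP {n : ℕ} (K : Set (Euc n)) : ℝ :=
  sInf {L : ℝ | ∃ (m : ℕ) (hm : NeZero m) (q : Fin m → Euc n),
    @IsBilliard n m hm K q ∧ @polyLength n m hm q = L}

namespace Stmt4Aux

open Finset

variable {n m : ℕ}

/-- basic reindexing -/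
lemma sum_comp_add_right [NeZero m] {α : Type*} [AddCommMonoid α] (f : Fin m → α) (k : Fin m) :
    ∑ i : Fin m, f (i + k) = ∑ i, f i :=
  Equiv.sum_comp (Equiv.addRight k) f

lemma sum_comp_add_one [NeZero m] {α : Type*} [AddCommMonoid α] (f : Fin m → α) :
    ∑ i : Fin m, f (i + 1) = ∑ i, f i :=
  sum_comp_add_right f 1

lemma sum_comp_sub_one [NeZero m] {α : Type*} [AddCommMonoid α] (f : Fin m → α) :
    ∑ i : Fin m, f (i - 1) = ∑ i, f i :=
  Equiv.sum_comp (Equiv.subRight (1 : Fin m)) f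

lemma polyLength_nonneg [NeZero m] (q : Fin m → Euc n) : 0 ≤ polyLength q :=
  Finset.sum_nonneg fun _ _ => norm_nonneg _

lemma sum_normalVec [NeZero m] (q : Fin m → Euc n) : ∑ i, normalVec q i = 0 := by
  unfold normalVec
  rw [Finset.sum_sub_distrib, sum_comp_sub_one (fun i => dir q i), sub_self]

lemma dir_translate [NeZero m] (q : Fin m → Euc n) (x : Euc n) (i : Fin m) :
    dir (fun j => q j + x) i = dir q i := by
  simp [dir]

lemma normalVec_translate [NeZero m] (q : Fin m → Euc n) (x : Euc n) (i : Fin m) :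
    normalVec (fun j => q j + x) i = normalVec q i := by
  simp [normalVec, dir_translate]

lemma polyLength_translate [NeZero m] (q : Fin m → Euc n) (x : Euc n) :
    polyLength (fun j => q j + x) = polyLength q := by
  unfold polyLength
  congr 1; ext i; congr 1; exact add_sub_add_right_eq_sub _ _ _

lemma polyLength_smul [NeZero m] (q : Fin m → Euc n) {s : ℝ} (hs : 0 ≤ s) :
    polyLength (fun j => s • q j) = s * polyLength q := by
  unfold polyLength
  rw [Finset.mul_sum]
  congr 1; ext i
  rw [← smul_sub, norm_smul, Real.norm_of_nonneg hs]

lemma inner_dir_edge [NeZero m] (q : Fin m → Euc n) (i : Fin m) (h : q (i + 1) ≠ q i) :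
    ⟪dir q i, q (i + 1) - q i⟫ = ‖q (i + 1) - q i‖ := by
  have hne : q (i + 1) - q i ≠ 0 := sub_ne_zero_of_ne h
  rw [dir, real_inner_smul_left, real_inner_self_eq_norm_sq]
  field_simp [norm_ne_zero_iff.2 hne]

lemma norm_dir [NeZero m] (q : Fin m → Euc n) (i : Fin m) (h : q (i + 1) ≠ q i) :
    ‖dir q i‖ = 1 := by
  have hne : q (i + 1) - q i ≠ 0 := sub_ne_zero_of_ne h
  rw [dir, norm_smul, norm_inv, norm_norm]
  field_simp [norm_ne_zero_iff.2 hne]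

/-- Key identity: `∑ ⟪ν i, q i⟫ = polyLength q` for polygons with nonzero edges. -/
lemma sum_inner_normal [NeZero m] (q : Fin m → Euc n) (h : ∀ i, q (i + 1) ≠ q i) :
    ∑ i, ⟪normalVec q i, q i⟫ = polyLength q := by
  unfold normalVec
  have h1 : ∑ i, ⟪dir q (i - 1), q i⟫ = ∑ i, ⟪dir q i, q (i + 1)⟫ := by
    rw [← sum_comp_add_one (fun i => ⟪dir q (i - 1), q i⟫)]
    congr 1; ext i; rw [add_sub_cancel_right]
  calc ∑ i, ⟪dir q (i - 1) - dir q i, q i⟫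
      = ∑ i, (⟪dir q (i - 1), q i⟫ - ⟪dir q i, q i⟫) := by
        congr 1; ext i; rw [inner_sub_left]
    _ = ∑ i, ⟪dir q (i - 1), q i⟫ - ∑ i, ⟪dir q i, q i⟫ := Finset.sum_sub_distrib _ _
    _ = ∑ i, ⟪dir q i, q (i + 1)⟫ - ∑ i, ⟪dir q i, q i⟫ := by rw [h1]
    _ = ∑ i, ⟪dir q i, q (i + 1) - q i⟫ := by
        rw [← Finset.sum_sub_distrib]; congr 1; ext i; rw [inner_sub_right]
    _ = polyLength q := by
        unfold polyLength; congr 1; ext i; exact inner_dir_edge q i (h i)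

def NonFit (K : Set (Euc n)) (p : Fin m → Euc n) : Prop :=
  ¬ ∃ x : Euc n, ∀ i, p i + x ∈ interior K

lemma nonFit_translate {K : Set (Euc n)} {p : Fin m → Euc n} (x₀ : Euc n) (h : NonFit K p) :
    NonFit K (fun i => p i + x₀) := by
  rintro ⟨x, hx⟩
  exact h ⟨x₀ + x, fun i => by simpa [add_assoc] using hx i⟩

lemma nonFit_of_range_subset {m' : ℕ} {K : Set (Euc n)} {p : Fin m → Euc n}
    {r : Fin m' → Euc n} (hsub : ∀ i, ∃ j, p i = r j) (h : NonFit K p) : NonFit K r := by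
  rintro ⟨x, hx⟩
  refine h ⟨x, fun i => ?_⟩
  obtain ⟨j, hj⟩ := hsub i
  rw [hj]; exact hx j

/-- A certificate that a polygon does not fit into the interior of `K`. -/
def Cert (K : Set (Euc n)) (w p : Fin m → Euc n) : Prop :=
  (∃ i, w i ≠ 0) ∧ (∑ i, w i = 0) ∧
    ∀ y : Fin m → Euc n, (∀ i, y i ∈ K) → ∑ i, ⟪w i, y i⟫ ≤ ∑ i, ⟪w i, p i⟫

lemma Cert.nonFit {K : Set (Euc n)} {w p : Fin m → Euc n} (hc : Cert K w p) : NonFit K p := by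
  obtain ⟨⟨i₀, hi₀⟩, hsum, hcert⟩ := hc
  rintro ⟨x, hx⟩
  -- perturb the i₀-th point a bit in direction w i₀
  obtain ⟨ε, hε, hball⟩ := Metric.isOpen_iff.1 isOpen_interior _ (hx i₀)
  set δ : ℝ := (ε / 2) / ‖w i₀‖ with hδdef
  have hwn : (0:ℝ) < ‖w i₀‖ := norm_pos_iff.2 hi₀
  have hδ : 0 < δ := div_pos (half_pos hε) hwn
  have hmem : p i₀ + x + δ • w i₀ ∈ interior K := by
    apply hball
    rw [Metric.mem_ball, dist_eq_norm]
    have : p i₀ + x + δ • w i₀ - (p i₀ + x) = δ • w i₀ := by abel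
    rw [this, norm_smul, Real.norm_of_nonneg hδ.le, hδdef, div_mul_cancel₀ _ hwn.ne']
    linarith
  set y : Fin m → Euc n := Function.update (fun i => p i + x) i₀ (p i₀ + x + δ • w i₀) with hy
  have hyK : ∀ i, y i ∈ K := by
    intro i
    rcases eq_or_ne i i₀ with rfl | hne
    · rw [hy, Function.update_self]; exact interior_subset hmem
    · rw [hy, Function.update_of_ne hne]; exact interior_subset (hx i)
  have hle := hcert y hyK
  have hsplit : ∑ i, ⟪w i, y i⟫ = ∑ i, ⟪w i, p i + x⟫ + δ * ‖w i₀‖ ^ 2 := by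
    have hterm : ∀ i ∈ Finset.univ, ⟪w i, y i⟫ =
        ⟪w i, p i + x⟫ + (if i = i₀ then δ * ‖w i₀‖ ^ 2 else 0) := by
      intro i _
      rcases eq_or_ne i i₀ with rfl | hne
      · rw [hy, Function.update_self, if_pos rfl, inner_add_right, real_inner_smul_right,
          real_inner_self_eq_norm_sq]
        try ring
      · rw [hy, Function.update_of_ne hne, if_neg hne, add_zero]
    have hite : ∑ i : Fin m, (if i = i₀ then δ * ‖w i₀‖ ^ 2 else 0) = δ * ‖w i₀‖ ^ 2 := by
      simp
    rw [Finset.sum_congr rfl hterm, Finset.sum_add_distrib, hite]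
  have hsum2 : ∑ i, ⟪w i, p i + x⟫ = ∑ i, ⟪w i, p i⟫ := by
    have : ∑ i, ⟪w i, p i + x⟫ = ∑ i, ⟪w i, p i⟫ + ⟪∑ i, w i, x⟫ := by
      rw [sum_inner]
      rw [← Finset.sum_add_distrib]
      congr 1; ext i; rw [inner_add_right]
    rw [this, hsum, inner_zero_left, add_zero]
  rw [hsplit, hsum2] at hle
  have hpos : 0 < δ * ‖w i₀‖ ^ 2 := by positivity
  linarith

/-- Separation: a non-fitting polygon admits a certificate. -/
lemma NonFit.cert {K : Set (Euc n)} (hK : IsConvexBody K) {p : Fin m → Euc n}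
    (h : NonFit K p) : ∃ w : Fin m → Euc n, Cert K w p := by
  classical
  obtain ⟨hKc, hKconv, z, hz⟩ := hK
  -- separate the open convex set of interior-tuples from the set of translates of p
  set S : Set (Fin m → Euc n) := Set.univ.pi (fun _ => interior K) with hS
  set T : Set (Fin m → Euc n) := {y | ∃ x : Euc n, y = fun i => p i + x} with hT
  have hSconv : Convex ℝ S := convex_pi fun i _ => hKconv.interior
  have hSopen : IsOpen S := isOpen_set_pi Set.finite_univ fun _ _ => isOpen_interior
  have hTconv : Convex ℝ T := by
    rintro y₁ ⟨x₁, rfl⟩ y₂ ⟨x₂, rfl⟩ a b ha hb hab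
    refine ⟨a • x₁ + b • x₂, ?_⟩
    funext i
    show a • (p i + x₁) + b • (p i + x₂) = p i + (a • x₁ + b • x₂)
    have h1 : a • p i + b • p i = p i := by rw [← add_smul, hab, one_smul]
    rw [smul_add, smul_add, show a • p i + a • x₁ + (b • p i + b • x₂)
      = (a • p i + b • p i) + (a • x₁ + b • x₂) by abel, h1]
  have hdisj : Disjoint S T := by
    rw [Set.disjoint_left]
    rintro y hyS ⟨x, rfl⟩
    exact h ⟨x, fun i => hyS i (Set.mem_univ i)⟩
  obtain ⟨f, u, hfS, hfT⟩ := geometric_hahn_banach_open hSconv hSopen hTconv hdisj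
  -- extract the component vectors
  set w : Fin m → Euc n := fun i =>
    (InnerProductSpace.toDual ℝ (Euc n)).symm
      (f.comp (LinearMap.toContinuousLinearMap (LinearMap.single ℝ (fun _ : Fin m => Euc n) i)))
    with hw
  have hf_eq : ∀ y : Fin m → Euc n, f y = ∑ i, ⟪w i, y i⟫ := by
    intro y
    have hy : y = ∑ i, Pi.single i (y i) := (Finset.univ_sum_single y).symm
    calc f y = f (∑ i, Pi.single i (y i)) := by rw [← hy]
      _ = ∑ i, f (Pi.single i (y i)) := map_sum f _ _
      _ = ∑ i, ⟪w i, y i⟫ := by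
          congr 1; ext i
          rw [hw]
          rw [InnerProductSpace.toDual_symm_apply]
          rfl
  -- u ≤ f (p + const x) for all x
  have hfp : ∀ x : Euc n, u ≤ f p + ⟪∑ i, w i, x⟫ := by
    intro x
    have := hfT (fun i => p i + x) ⟨x, rfl⟩
    rw [hf_eq] at this
    have e : ∑ i, ⟪w i, p i + x⟫ = ∑ i, ⟪w i, p i⟫ + ⟪∑ i, w i, x⟫ := by
      rw [sum_inner, ← Finset.sum_add_distrib]
      congr 1; ext i; rw [inner_add_right]
    rw [e] at this
    rw [hf_eq]
    exact this
  have hsw : ∑ i, w i = 0 := by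
    by_contra hne
    have hpos : (0:ℝ) < ‖∑ i, w i‖ ^ 2 := pow_pos (norm_pos_iff.2 hne) 2
    have h1 := hfp (((u - f p - 1) / ‖∑ i, w i‖ ^ 2) • (∑ i, w i))
    rw [real_inner_smul_right, real_inner_self_eq_norm_sq,
      div_mul_cancel₀ _ hpos.ne'] at h1
    linarith
  have hup : u ≤ f p := by simpa using hfp 0
  -- certificate inequality on K-tuples, via approximation from the interior
  have hcert : ∀ y : Fin m → Euc n, (∀ i, y i ∈ K) → ∑ i, ⟪w i, y i⟫ ≤ ∑ i, ⟪w i, p i⟫ := by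
    intro y hy
    have key : ∀ t : ℝ, 0 < t → t ≤ 1 → f (fun i => y i + t • (z - y i)) < u := by
      intro t ht ht1
      apply hfS
      intro i _
      have := hKconv.add_smul_sub_mem_interior (hy i) hz ⟨ht, ht1⟩
      simpa using this
    have hlim : Filter.Tendsto (fun t : ℝ => f (fun i => y i + t • (z - y i)))
        (nhdsWithin 0 (Set.Ioi 0)) (nhds (f y)) := by
      have hcont : Continuous (fun t : ℝ => f (fun i => y i + t • (z - y i))) :=
        f.continuous.comp (continuous_pi fun i =>
          continuous_const.add (continuous_id.smul continuous_const))
      have := hcont.tendsto 0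
      simp only [zero_smul, add_zero] at this
      exact this.mono_left nhdsWithin_le_nhds
    have hfy : f y ≤ u := by
      refine le_of_tendsto hlim ?_
      filter_upwards [Ioo_mem_nhdsGT_of_mem (Set.left_mem_Ico.2 one_pos)] with t ht
      exact (key t ht.1 ht.2.le).le
    calc ∑ i, ⟪w i, y i⟫ = f y := (hf_eq y).symm
      _ ≤ u := hfy
      _ ≤ f p := hup
      _ = ∑ i, ⟪w i, p i⟫ := hf_eq p
  -- some w i is nonzero
  have hwne : ∃ i, w i ≠ 0 := by
    by_contra hall
    push_neg at hall
    have hf0 : ∀ y, f y = 0 := by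
      intro y; rw [hf_eq]
      apply Finset.sum_eq_zero
      intro i _
      rw [hall i, inner_zero_left]
    have h1 := hfS (fun _ => z) (fun i _ => hz)
    rw [hf0] at h1
    have h2 := hup
    rw [hf0] at h2
    linarith
  exact ⟨w, hwne, hsw, hcert⟩


/-- Derivative of `t ↦ ‖e + t • d‖` at `0`. -/
lemma hasDerivAt_norm_line {E : Type*} [NormedAddCommGroup E] [InnerProductSpace ℝ E]
    {e d : E} (he : e ≠ 0) :
    HasDerivAt (fun t : ℝ => ‖e + t • d‖) (⟪e, d⟫ / ‖e‖) 0 := by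
  set g : ℝ → ℝ := fun t => ⟪e, e⟫ + (2 * ⟪e, d⟫) * t + ⟪d, d⟫ * t ^ 2 with hg
  have hgd : HasDerivAt g (2 * ⟪e, d⟫) 0 := by
    have h1 : HasDerivAt (fun t : ℝ => ⟪e, e⟫ + (2 * ⟪e, d⟫) * t + ⟪d, d⟫ * t ^ 2)
        (0 + (2 * ⟪e, d⟫) * 1 + ⟪d, d⟫ * (2 * 0 ^ 1)) 0 := by
      apply HasDerivAt.add
      apply HasDerivAt.add
      · exact hasDerivAt_const 0 _
      · simpa using (hasDerivAt_id (0:ℝ)).const_mul (2 * ⟪e, d⟫)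
      · exact (hasDerivAt_pow 2 (0:ℝ)).const_mul ⟪d, d⟫
    simpa [hg] using h1
  have hkey : (fun t : ℝ => ‖e + t • d‖) = fun t => Real.sqrt (g t) := by
    funext t
    rw [norm_eq_sqrt_real_inner, hg]
    congr 1
    rw [real_inner_add_add_self, real_inner_smul_right, real_inner_smul_left,
      real_inner_smul_right]
    ring
  have hg00 : g 0 = ‖e‖ ^ 2 := by
    rw [hg]; simp [real_inner_self_eq_norm_sq]
  have hg0 : g 0 ≠ 0 := by
    rw [hg00]
    exact pow_ne_zero 2 (norm_ne_zero_iff.2 he)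
  have := hgd.sqrt hg0
  rw [hkey]
  convert this using 1
  have hs : Real.sqrt (g 0) = ‖e‖ := by
    rw [hg00, Real.sqrt_sq (norm_nonneg e)]
  rw [hs]
  ring

/-- Each vertex is within `polyLength` of vertex `0`. -/
lemma norm_sub_zero_le [NeZero m] (p : Fin m → Euc n) (i : Fin m) :
    ‖p i - p 0‖ ≤ polyLength p := by
  suffices h : ∀ k : ℕ, ∀ hk : k < m, ‖p ⟨k, hk⟩ - p 0‖ ≤
      ∑ j ∈ Finset.univ.filter (fun j : Fin m => j.val < k), ‖p (j + 1) - p j‖ by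
    have := h i.val i.isLt
    simp only [Fin.eta] at this
    refine this.trans ?_
    apply Finset.sum_le_sum_of_subset_of_nonneg (Finset.filter_subset _ _)
    intro j _ _; exact norm_nonneg _
  intro k
  induction k with
  | zero =>
    intro hk
    have : (⟨0, hk⟩ : Fin m) = 0 := rfl
    rw [this, sub_self, norm_zero]
    exact Finset.sum_nonneg fun j _ => norm_nonneg _
  | succ k ih =>
    intro hk
    have hk' : k < m := Nat.lt_of_succ_lt hk
    have hstep : (⟨k + 1, hk⟩ : Fin m) = (⟨k, hk'⟩ : Fin m) + 1 := by
      apply Fin.ext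
      simp [Fin.add_def, Nat.mod_eq_of_lt hk]
    have hfil : Finset.univ.filter (fun j : Fin m => j.val < k + 1) =
        insert (⟨k, hk'⟩ : Fin m) (Finset.univ.filter (fun j : Fin m => j.val < k)) := by
      ext j
      simp only [Finset.mem_filter, Finset.mem_univ, true_and, Finset.mem_insert]
      constructor
      · intro hj
        rcases Nat.lt_succ_iff_lt_or_eq.1 hj with h | h
        · exact Or.inr h
        · exact Or.inl (Fin.ext h)
      · rintro (rfl | hj)
        · exact Nat.lt_succ_self k
        · exact Nat.lt_succ_of_lt hj
    have hnotmem : (⟨k, hk'⟩ : Fin m) ∉ Finset.univ.filter (fun j : Fin m => j.val < k) := by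
      simp
    rw [hfil, Finset.sum_insert hnotmem]
    calc ‖p ⟨k + 1, hk⟩ - p 0‖
        ≤ ‖p ⟨k + 1, hk⟩ - p ⟨k, hk'⟩‖ + ‖p ⟨k, hk'⟩ - p 0‖ := norm_sub_le_norm_sub_add_norm_sub _ _ _
      _ ≤ ‖p ((⟨k, hk'⟩ : Fin m) + 1) - p ⟨k, hk'⟩‖ +
            ∑ j ∈ Finset.univ.filter (fun j : Fin m => j.val < k), ‖p (j + 1) - p j‖ := by
          rw [← hstep]
          exact add_le_add le_rfl (ih hk')
      _ = _ := rfl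

lemma continuous_polyLength [NeZero m] :
    Continuous (fun p : Fin m → Euc n => polyLength p) := by
  apply continuous_finset_sum
  intro i _
  exact ((continuous_apply (i + 1)).sub (continuous_apply i)).norm

/-- The set `{p | ∃x, ∀ i, p i + x ∈ interior K}` is open. -/
lemma isOpen_fit (K : Set (Euc n)) :
    IsOpen {p : Fin m → Euc n | ∃ x : Euc n, ∀ i, p i + x ∈ interior K} := by
  rw [Metric.isOpen_iff]
  rintro p ⟨x, hx⟩
  have hball : ∀ i, ∃ ε > 0, ball (p i + x) ε ⊆ interior K := fun i =>
    Metric.isOpen_iff.1 isOpen_interior _ (hx i)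
  choose ε hε hb using hball
  rcases isEmpty_or_nonempty (Fin m) with hemp | hne
  · exact ⟨1, one_pos, fun q _ => ⟨x, fun i => (hemp.false i).elim⟩⟩
  refine ⟨Finset.univ.inf' Finset.univ_nonempty ε, ?_, ?_⟩
  · exact (Finset.lt_inf'_iff _).2 fun i _ => hε i
  · intro q hq
    refine ⟨x, fun i => ?_⟩
    apply hb i
    rw [Metric.mem_ball]
    calc dist (q i + x) (p i + x) = dist (q i) (p i) := by
          simp [dist_eq_norm]
      _ ≤ dist q p := dist_le_pi_dist q p i
      _ < _ := lt_of_lt_of_le hq (Finset.inf'_le _ (Finset.mem_univ i))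

/-- Existence of a minimizing non-fitting polygon. -/
lemma exists_min_nonFit [NeZero m] {K : Set (Euc n)} (hK : IsConvexBody K)
    {p : Fin m → Euc n} (hp : NonFit K p) :
    ∃ q : Fin m → Euc n, NonFit K q ∧ polyLength q ≤ polyLength p ∧
      ∀ r : Fin m → Euc n, NonFit K r → polyLength q ≤ polyLength r := by
  obtain ⟨z, hz⟩ := hK.2.2
  have hzK : z ∈ K := interior_subset hz
  set L₀ := polyLength p with hL₀
  set T : Set (Fin m → Euc n) :=
    {r | NonFit K r ∧ r 0 = z ∧ polyLength r ≤ L₀} with hT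
  have hTne : T.Nonempty := by
    refine ⟨fun i => p i + (z - p 0), nonFit_translate _ hp, by simp, ?_⟩
    rw [polyLength_translate]
  have hTclosed : IsClosed T := by
    have h1 : IsClosed {r : Fin m → Euc n | NonFit K r} := by
      rw [show {r : Fin m → Euc n | NonFit K r} =
        {r : Fin m → Euc n | ∃ x : Euc n, ∀ i, r i + x ∈ interior K}ᶜ from rfl]
      exact (isOpen_fit K).isClosed_compl
    have h2 : IsClosed {r : Fin m → Euc n | r 0 = z} :=
      isClosed_eq (continuous_apply 0) continuous_const
    have h3 : IsClosed {r : Fin m → Euc n | polyLength r ≤ L₀} :=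
      isClosed_le continuous_polyLength continuous_const
    have hTeq : T = ({r : Fin m → Euc n | NonFit K r} ∩ {r | r 0 = z}) ∩
        {r | polyLength r ≤ L₀} := by
      ext r
      simp only [hT, Set.mem_setOf_eq, Set.mem_inter_iff, and_assoc]
    rw [hTeq]
    exact (h1.inter h2).inter h3
  have hTbdd : Bornology.IsBounded T := by
    apply (Metric.isBounded_closedBall (x := (fun _ => z : Fin m → Euc n))
      (r := max L₀ 0)).subset
    intro r hr
    rw [Metric.mem_closedBall, dist_pi_le_iff (le_max_right _ _)]
    intro i
    rw [dist_eq_norm]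
    calc ‖r i - z‖ = ‖r i - r 0‖ := by rw [hr.2.1]
      _ ≤ polyLength r := norm_sub_zero_le r i
      _ ≤ L₀ := hr.2.2
      _ ≤ max L₀ 0 := le_max_left _ _
  have hTcompact : IsCompact T := Metric.isCompact_of_isClosed_isBounded hTclosed hTbdd
  obtain ⟨q, hqT, hqmin⟩ := hTcompact.exists_isMinOn hTne continuous_polyLength.continuousOn
  refine ⟨q, hqT.1, hqT.2.2, ?_⟩
  intro r hr
  by_cases hcase : polyLength r ≤ L₀
  · have : (fun i => r i + (z - r 0)) ∈ T := by
      refine ⟨nonFit_translate _ hr, by simp, ?_⟩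
      rw [polyLength_translate]; exact hcase
    have h5 : polyLength q ≤ polyLength (fun i => r i + (z - r 0)) := hqmin this
    rwa [polyLength_translate] at h5
  · push_neg at hcase
    exact le_trans hqT.2.2 hcase.le


/-- Rotation of a polygon. -/
def rot [NeZero m] (q : Fin m → Euc n) (k : Fin m) : Fin m → Euc n := fun i => q (i + k)

lemma polyLength_rot [NeZero m] (q : Fin m → Euc n) (k : Fin m) :
    polyLength (rot q k) = polyLength q := by
  unfold polyLength rot
  rw [← sum_comp_add_right (fun j => ‖q (j + 1) - q j‖) k]
  congr 1; ext i
  rw [add_right_comm]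

lemma nonFit_rot [NeZero m] {K : Set (Euc n)} {q : Fin m → Euc n} (k : Fin m)
    (h : NonFit K q) : NonFit K (rot q k) := by
  apply nonFit_of_range_subset (fun i => ⟨i - k, by unfold rot; rw [sub_add_cancel]⟩) h

lemma dir_rot [NeZero m] (q : Fin m → Euc n) (k : Fin m) (i : Fin m) :
    dir (rot q k) i = dir q (i + k) := by
  unfold dir rot
  rw [add_right_comm]

lemma normalVec_rot [NeZero m] (q : Fin m → Euc n) (k : Fin m) (i : Fin m) :
    normalVec (rot q k) i = normalVec q (i + k) := by
  unfold normalVec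
  rw [dir_rot, dir_rot, sub_add_eq_add_sub]

/-- Deleting the last vertex of a polygon does not increase the length. -/
lemma polyLength_delete {m₁ : ℕ} (p : Fin (m₁ + 2) → Euc n) :
    polyLength (fun j : Fin (m₁ + 1) => p j.castSucc) ≤ polyLength p := by
  set F : Fin (m₁ + 2) → ℝ := fun i => ‖p (i + 1) - p i‖ with hF
  set p' : Fin (m₁ + 1) → Euc n := fun j => p j.castSucc with hp'
  set H : Fin (m₁ + 1) → ℝ := fun j => ‖p' (j + 1) - p' j‖ with hH
  have hsplit2 : polyLength p = (∑ i : Fin m₁, F i.castSucc.castSucc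
      + F (Fin.last m₁).castSucc) + F (Fin.last (m₁ + 1)) := by
    unfold polyLength
    rw [← hF, Fin.sum_univ_castSucc (f := F), Fin.sum_univ_castSucc (f := fun i : Fin (m₁+1) => F i.castSucc)]
  have hsplit1 : polyLength p' = ∑ j : Fin m₁, H j.castSucc + H (Fin.last m₁) := by
    unfold polyLength
    rw [← hH, Fin.sum_univ_castSucc (f := H)]
  have hmain : ∀ j : Fin m₁, H j.castSucc = F j.castSucc.castSucc := by
    intro j
    have h1 : (j.castSucc + 1 : Fin (m₁ + 1)).castSucc = j.castSucc.castSucc + 1 := by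
      apply Fin.ext
      have hj : j.val < m₁ := j.isLt
      have h1a : ((1 : Fin (m₁+1))).val = 1 := by
        rw [Fin.val_one']; exact Nat.mod_eq_of_lt (by omega)
      have h1b : ((1 : Fin (m₁+2))).val = 1 := by
        rw [Fin.val_one']; exact Nat.mod_eq_of_lt (by omega)
      simp only [Fin.coe_castSucc, Fin.add_def]
      rw [h1a, h1b, Nat.mod_eq_of_lt (by omega), Nat.mod_eq_of_lt (by omega)]
    rw [hH, hF]
    show ‖p' (j.castSucc + 1) - p' j.castSucc‖ = ‖p (j.castSucc.castSucc + 1) - p j.castSucc.castSucc‖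
    rw [hp']
    show ‖p (j.castSucc + 1).castSucc - p j.castSucc.castSucc‖ = _
    rw [h1]
  have hseam : H (Fin.last m₁) ≤ F (Fin.last m₁).castSucc + F (Fin.last (m₁ + 1)) := by
    have e1 : (Fin.last m₁ + 1 : Fin (m₁ + 1)) = 0 := by
      apply Fin.ext; simp [Fin.add_def]
    have e2 : (Fin.last (m₁ + 1) + 1 : Fin (m₁ + 2)) = 0 := by
      apply Fin.ext; simp [Fin.add_def]
    have e3 : ((Fin.last m₁).castSucc + 1 : Fin (m₁ + 2)) = Fin.last (m₁ + 1) := by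
      apply Fin.ext; simp [Fin.add_def, Nat.mod_eq_of_lt]
    rw [hH, hF]
    show ‖p' (Fin.last m₁ + 1) - p' (Fin.last m₁)‖ ≤
      ‖p ((Fin.last m₁).castSucc + 1) - p (Fin.last m₁).castSucc‖ +
      ‖p (Fin.last (m₁+1) + 1) - p (Fin.last (m₁+1))‖
    rw [e1, e2, e3, hp']
    show ‖p (0 : Fin (m₁+1)).castSucc - p (Fin.last m₁).castSucc‖ ≤ _
    have e4 : ((0 : Fin (m₁+1)).castSucc : Fin (m₁+2)) = 0 := rfl
    rw [e4]
    calc ‖p 0 - p (Fin.last m₁).castSucc‖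
        ≤ ‖p 0 - p (Fin.last (m₁+1))‖ + ‖p (Fin.last (m₁+1)) - p (Fin.last m₁).castSucc‖ :=
          norm_sub_le_norm_sub_add_norm_sub _ _ _
      _ = ‖p (Fin.last (m₁+1)) - p (Fin.last m₁).castSucc‖ + ‖p 0 - p (Fin.last (m₁+1))‖ := by ring
  rw [hsplit1, hsplit2]
  have := Finset.sum_congr rfl (fun j (_ : j ∈ Finset.univ) => hmain j)
  rw [this]
  linarith [hseam]

/-- Deleting the last vertex preserves non-fitting, provided the deleted vertex lies on the
segment between its neighbours. -/
lemma nonFit_delete {m₁ : ℕ} {K : Set (Euc n)} (hKconv : Convex ℝ K)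
    {p : Fin (m₁ + 2) → Euc n}
    (hseg : p (Fin.last (m₁ + 1)) ∈
      segment ℝ (p (Fin.last m₁).castSucc) (p (0 : Fin (m₁+1)).castSucc))
    (h : NonFit K p) : NonFit K (fun j : Fin (m₁ + 1) => p j.castSucc) := by
  rintro ⟨x, hx⟩
  refine h ⟨x, fun i => ?_⟩
  rcases eq_or_ne i (Fin.last (m₁ + 1)) with rfl | hne
  · -- use segment membership and convexity of the interior
    obtain ⟨a, b, ha, hb, hab, hcomb⟩ := hseg
    have h1 := hx (Fin.last m₁)
    have h2 := hx 0
    have hx1 : x = a • x + b • x := by rw [← add_smul, hab, one_smul]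
    have heq : p (Fin.last (m₁+1)) + x =
        a • (p (Fin.last m₁).castSucc + x) + b • (p (0 : Fin (m₁+1)).castSucc + x) := by
      rw [smul_add, smul_add, ← hcomb]
      nth_rewrite 1 [hx1]
      abel
    rw [heq]
    exact hKconv.interior h1 h2 ha hb hab
  · have : i = (i.castPred hne).castSucc := (Fin.castSucc_castPred i hne).symm
    rw [this]
    exact hx (i.castPred hne)


/-- Collapsing a sum against `Pi.single`. -/
lemma sum_inner_single (z : Fin m → Euc n) (i : Fin m) (x : Euc n) :
    ∑ j, ⟪z j, (Pi.single i x : Fin m → Euc n) j⟫ = ⟪z i, x⟫ := by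
  classical
  rw [Finset.sum_eq_single i]
  · rw [Pi.single_eq_same]
  · intro b _ hb
    rw [Pi.single_eq_of_ne hb, inner_zero_right]
  · intro h; exact absurd (Finset.mem_univ i) h

lemma sum_inner_lin (z : Fin m → Euc n) (a : ℝ) (v₁ v₂ : Fin m → Euc n) :
    ∑ i, ⟪z i, v₁ i + a • v₂ i⟫ = ∑ i, ⟪z i, v₁ i⟫ + a * ∑ i, ⟪z i, v₂ i⟫ := by
  rw [Finset.mul_sum, ← Finset.sum_add_distrib]
  congr 1; ext i
  rw [inner_add_right, real_inner_smul_right]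

/-- A nondegenerate minimizer of length among non-fitting `m`-gons is, after a suitable
translation, a billiard trajectory on `K`. -/
lemma min_is_billiard [NeZero m] {K : Set (Euc n)} (hK : IsConvexBody K)
    (hm : 2 ≤ m) {q : Fin m → Euc n}
    (hNF : NonFit K q)
    (hmin : ∀ r : Fin m → Euc n, NonFit K r → polyLength q ≤ polyLength r)
    (hedge : ∀ i, q (i + 1) ≠ q i)
    (hnu : ∀ i, normalVec q i ≠ 0) :
    ∃ Q : Fin m → Euc n, IsBilliard K Q ∧ polyLength Q = polyLength q := by
  classical
  obtain ⟨w, ⟨i₀, hwi₀⟩, hwsum, hwcert⟩ := hNF.cert hK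
  -- derivative of length under perturbations
  have hderiv : ∀ v : Fin m → Euc n,
      HasDerivAt (fun t : ℝ => polyLength (fun i => q i + t • v i))
        (∑ i, ⟪normalVec q i, v i⟫) 0 := by
    intro v
    have h2 : HasDerivAt (fun t : ℝ => ∑ i, ‖(q (i+1) - q i) + t • (v (i+1) - v i)‖)
        (∑ i, ⟪q (i+1) - q i, v (i+1) - v i⟫ / ‖q (i+1) - q i‖) 0 :=
      HasDerivAt.fun_sum (fun i _ => hasDerivAt_norm_line (sub_ne_zero_of_ne (hedge i)))
    have hfun : (fun t : ℝ => ∑ i, ‖(q (i+1) - q i) + t • (v (i+1) - v i)‖)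
        = fun t : ℝ => polyLength (fun i => q i + t • v i) := by
      funext t
      unfold polyLength
      congr 1; ext i
      congr 1
      rw [smul_sub]
      exact sub_add_sub_comm _ _ _ _
    have hval : ∑ i, ⟪q (i+1) - q i, v (i+1) - v i⟫ / ‖q (i+1) - q i‖
        = ∑ i, ⟪normalVec q i, v i⟫ := by
      have hstep : ∀ i, ⟪q (i+1) - q i, v (i+1) - v i⟫ / ‖q (i+1) - q i‖
          = ⟪dir q i, v (i+1)⟫ - ⟪dir q i, v i⟫ := by
        intro i
        rw [dir, real_inner_smul_left, real_inner_smul_left, ← mul_sub, ← inner_sub_right,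
          div_eq_inv_mul]
      rw [Finset.sum_congr rfl fun i _ => hstep i, Finset.sum_sub_distrib]
      have hre : ∑ i, ⟪dir q i, v (i+1)⟫ = ∑ i, ⟪dir q (i-1), v i⟫ := by
        rw [← sum_comp_add_one (fun i => ⟪dir q (i - 1), v i⟫)]
        congr 1; ext i
        rw [add_sub_cancel_right]
      rw [hre, ← Finset.sum_sub_distrib]
      congr 1; ext i
      rw [normalVec, inner_sub_left]
    rw [← hfun, ← hval]
    exact h2
  -- minimality forces the direction derivative to be nonnegative on the certificate halfspace
  have hKKT : ∀ v : Fin m → Euc n, 0 ≤ ∑ i, ⟪w i, v i⟫ → 0 ≤ ∑ i, ⟪normalVec q i, v i⟫ := by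
    intro v hv
    have hNFt : ∀ t : ℝ, 0 ≤ t → NonFit K (fun i => q i + t • v i) := by
      intro t ht
      apply Cert.nonFit (w := w)
      refine ⟨⟨i₀, hwi₀⟩, hwsum, ?_⟩
      intro y hy
      have hexp : ∑ i, ⟪w i, q i + t • v i⟫ = ∑ i, ⟪w i, q i⟫ + t * ∑ i, ⟪w i, v i⟫ :=
        sum_inner_lin w t q v
      calc ∑ i, ⟪w i, y i⟫ ≤ ∑ i, ⟪w i, q i⟫ := hwcert y hy
        _ ≤ ∑ i, ⟪w i, q i + t • v i⟫ := by rw [hexp]; nlinarith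
    have hd := (hderiv v)
    rw [hasDerivAt_iff_tendsto_slope] at hd
    have hsub : Set.Ioi (0:ℝ) ⊆ {(0:ℝ)}ᶜ := fun t ht => ne_of_gt ht
    have hd' := hd.mono_left (nhdsWithin_mono (0:ℝ) hsub)
    refine ge_of_tendsto hd' ?_
    filter_upwards [self_mem_nhdsWithin] with t ht
    have hge : polyLength q ≤ polyLength (fun i => q i + t • v i) :=
      hmin _ (hNFt t (le_of_lt ht))
    have h0 : polyLength (fun i => q i + (0:ℝ) • v i) = polyLength q := by
      congr 1; funext i; rw [zero_smul, add_zero]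
    show 0 ≤ slope (fun t : ℝ => polyLength (fun i => q i + t • v i)) 0 t
    rw [slope_def_field]
    rw [h0]
    apply div_nonneg (by linarith) (by simpa using (le_of_lt ht))
  -- align the certificate with the normals
  have hWw : 0 < ∑ i, ⟪w i, w i⟫ := by
    apply Finset.sum_pos' (fun i _ => real_inner_self_nonneg)
    refine ⟨i₀, Finset.mem_univ _, ?_⟩
    rw [real_inner_self_eq_norm_sq]
    exact pow_pos (norm_pos_iff.2 hwi₀) 2
  set lam : ℝ := (∑ i, ⟪normalVec q i, w i⟫) / (∑ i, ⟪w i, w i⟫) with hlam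
  have hNv : ∀ v : Fin m → Euc n,
      ∑ i, ⟪normalVec q i, v i⟫ = lam * ∑ i, ⟪w i, v i⟫ := by
    intro v
    set Nv : ℝ := ∑ i, ⟪normalVec q i, v i⟫ with hNvdef
    set Wv : ℝ := ∑ i, ⟪w i, v i⟫ with hWvdef
    set Nw : ℝ := ∑ i, ⟪normalVec q i, w i⟫ with hNwdef
    set Ww : ℝ := ∑ i, ⟪w i, w i⟫ with hWwdef
    set aa : ℝ := -(Wv / Ww) with haa
    have hWu : ∑ i, ⟪w i, v i + aa • w i⟫ = 0 := by
      rw [sum_inner_lin, ← hWvdef, ← hWwdef, haa, neg_mul, div_mul_cancel₀ _ (ne_of_gt hWw)]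
      exact add_neg_cancel Wv
    have h1 : 0 ≤ ∑ i, ⟪normalVec q i, v i + aa • w i⟫ := hKKT _ (le_of_eq hWu.symm)
    have hzero : ∀ z : Fin m → Euc n, ∑ i, ⟪z i, ((fun _ => (0 : Euc n)) : Fin m → Euc n) i⟫ = 0 := by
      intro z
      apply Finset.sum_eq_zero
      intro i _
      exact inner_zero_right _
    have hWu' : ∑ i, ⟪w i, ((fun _ => (0 : Euc n)) : Fin m → Euc n) i
        + (-1:ℝ) • (v i + aa • w i)⟫ = 0 := by
      rw [sum_inner_lin w (-1 : ℝ) (fun _ => (0 : Euc n)) (fun i => v i + aa • w i), hzero, hWu]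
      ring
    have h2 : 0 ≤ ∑ i, ⟪normalVec q i, ((fun _ => (0 : Euc n)) : Fin m → Euc n) i
        + (-1:ℝ) • (v i + aa • w i)⟫ := hKKT _ (le_of_eq hWu'.symm)
    rw [sum_inner_lin (normalVec q) (-1 : ℝ) (fun _ => (0 : Euc n))
      (fun i => v i + aa • w i), hzero] at h2
    have h3 : ∑ i, ⟪normalVec q i, v i + aa • w i⟫ = 0 := by linarith
    rw [sum_inner_lin, ← hNvdef, ← hNwdef] at h3
    have h4 : Nv = (Wv / Ww) * Nw := by
      rw [haa, neg_mul] at h3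
      linarith
    rw [hlam, h4]
    ring
  have hlam0 : 0 ≤ lam :=
    div_nonneg (hKKT w (le_of_lt hWw)) (le_of_lt hWw)
  have hcomp : ∀ i, normalVec q i = lam • w i := by
    intro i
    have key : ∀ x : Euc n, ⟪normalVec q i - lam • w i, x⟫ = 0 := by
      intro x
      have h1 := hNv (Pi.single i x)
      rw [sum_inner_single, sum_inner_single] at h1
      rw [inner_sub_left, real_inner_smul_left]
      linarith
    have h2 := key (normalVec q i - lam • w i)
    rw [inner_self_eq_zero] at h2
    exact sub_eq_zero.1 h2
  have hlampos : 0 < lam := by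
    rcases eq_or_lt_of_le hlam0 with heq | h
    · exfalso
      apply hnu i₀
      rw [hcomp i₀, ← heq, zero_smul]
    · exact h
  have hcertnu : ∀ y : Fin m → Euc n, (∀ i, y i ∈ K) →
      ∑ i, ⟪normalVec q i, y i⟫ ≤ ∑ i, ⟪normalVec q i, q i⟫ := by
    intro y hy
    have e : ∀ (v : Fin m → Euc n),
        ∑ i, ⟪normalVec q i, v i⟫ = lam * ∑ i, ⟪w i, v i⟫ := by
      intro v
      rw [Finset.mul_sum]
      congr 1; ext i
      rw [hcomp i, real_inner_smul_left]
    rw [e y, e q]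
    exact mul_le_mul_of_nonneg_left (hwcert y hy) hlam0
  -- a translate of `q` inside `K`
  obtain ⟨z, hz⟩ := hK.2.2
  have hlenpos : 0 < polyLength q := by
    apply Finset.sum_pos' (fun i _ => norm_nonneg _)
    exact ⟨i₀, Finset.mem_univ _, norm_pos_iff.2 (sub_ne_zero_of_ne (hedge i₀))⟩
  set s : ℕ → ℝ := fun k => 1 / (k + 1) with hs
  have hs0 : ∀ k, 0 < s k := fun k => by
    simp only [hs]
    positivity
  have hs1 : ∀ k, s k ≤ 1 := by
    intro k
    show (1:ℝ) / (k + 1) ≤ 1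
    rw [div_le_one (by positivity)]
    linarith [Nat.cast_nonneg (α := ℝ) k]
  have hfit : ∀ k : ℕ, ∃ x, ∀ i, ((1 - s k) • q i + (s k) • z) + x ∈ interior K := by
    intro k
    by_contra hnf
    have hNFk : NonFit K (fun i => (1 - s k) • q i + (s k) • z) := hnf
    have hlen : polyLength (fun i => (1 - s k) • q i + s k • z)
        = (1 - s k) * polyLength q := by
      rw [polyLength_translate (fun i => (1 - s k) • q i) (s k • z),
        polyLength_smul q (by linarith [hs1 k])]
    have hge := hmin _ hNFk
    rw [hlen] at hge
    nlinarith [hs0 k, hlenpos]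
  choose xs hxs using hfit
  obtain ⟨R, hR⟩ := hK.1.isBounded.subset_closedBall 0
  have hxsb : ∀ k, xs k ∈ Metric.closedBall (0 : Euc n) (R + (‖q 0‖ + ‖z‖)) := by
    intro k
    have h2 : ((1 - s k) • q 0 + s k • z) + xs k ∈ Metric.closedBall (0 : Euc n) R :=
      hR (interior_subset (hxs k 0))
    rw [Metric.mem_closedBall, dist_zero_right] at h2 ⊢
    have h4 : ‖(1 - s k) • q 0 + s k • z‖ ≤ ‖q 0‖ + ‖z‖ := by
      calc ‖(1 - s k) • q 0 + s k • z‖ ≤ ‖(1 - s k) • q 0‖ + ‖s k • z‖ := norm_add_le _ _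
        _ = (1 - s k) * ‖q 0‖ + s k * ‖z‖ := by
            rw [norm_smul, norm_smul, Real.norm_of_nonneg (by linarith [hs1 k]),
              Real.norm_of_nonneg (le_of_lt (hs0 k))]
        _ ≤ ‖q 0‖ + ‖z‖ := by
            have := hs0 k
            have := hs1 k
            nlinarith [norm_nonneg (q 0), norm_nonneg z]
    calc ‖xs k‖ = ‖(((1 - s k) • q 0 + s k • z) + xs k) - ((1 - s k) • q 0 + s k • z)‖ := by
          congr 1; abel
      _ ≤ ‖((1 - s k) • q 0 + s k • z) + xs k‖ + ‖(1 - s k) • q 0 + s k • z‖ :=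
          norm_sub_le _ _
      _ ≤ R + (‖q 0‖ + ‖z‖) := add_le_add h2 h4
  obtain ⟨xb, -, φ, hφmono, hφtend⟩ :=
    tendsto_subseq_of_bounded Metric.isBounded_closedBall hxsb
  have hsφ : Filter.Tendsto (fun k => s (φ k)) Filter.atTop (nhds 0) := by
    have h1 : Filter.Tendsto (fun k : ℕ => (1:ℝ) / (k + 1)) Filter.atTop (nhds 0) :=
      tendsto_one_div_add_atTop_nhds_zero_nat
    exact h1.comp hφmono.tendsto_atTop
  have hmemK : ∀ i, q i + xb ∈ K := by
    intro i
    have hcl : IsClosed K := hK.1.isClosed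
    have h1 : Filter.Tendsto
        (fun k => ((1 - s (φ k)) • q i + s (φ k) • z) + xs (φ k)) Filter.atTop
        (nhds (((1 - (0:ℝ)) • q i + (0:ℝ) • z) + xb)) :=
      (((tendsto_const_nhds.sub hsφ).smul tendsto_const_nhds).add
        (hsφ.smul tendsto_const_nhds)).add hφtend
    have h2 : Filter.Tendsto
        (fun k => ((1 - s (φ k)) • q i + s (φ k) • z) + xs (φ k)) Filter.atTop
        (nhds (q i + xb)) := by
      have : ((1 - (0:ℝ)) • q i + (0:ℝ) • z) + xb = q i + xb := by
        rw [sub_zero, one_smul, zero_smul, add_zero]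
      rwa [this] at h1
    exact hcl.mem_of_tendsto h2
      (Filter.Eventually.of_forall fun k => interior_subset (hxs (φ k) i))
  -- support points
  have hKne : K.Nonempty := ⟨z, interior_subset hz⟩
  have hmax : ∀ i : Fin m, ∃ a ∈ K, ∀ y ∈ K, ⟪normalVec q i, y⟫ ≤ ⟪normalVec q i, a⟫ := by
    intro i
    obtain ⟨a, haK, hamax⟩ := hK.1.exists_isMaxOn hKne
      (((continuous_const.inner continuous_id).continuousOn) :
        ContinuousOn (fun y : Euc n => ⟪normalVec q i, y⟫) K)
    exact ⟨a, haK, fun y hy => hamax hy⟩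
  choose a haK hamax using hmax
  -- the translated polygon is a billiard trajectory
  set Q : Fin m → Euc n := fun i => q i + xb with hQ
  have htrans : ∀ i, normalVec Q i = normalVec q i := fun i => normalVec_translate q xb i
  have hsumQ : ∑ i, ⟪normalVec q i, Q i⟫ = ∑ i, ⟪normalVec q i, q i⟫ := by
    rw [hQ]
    have : ∑ i, ⟪normalVec q i, q i + xb⟫ = ∑ i, ⟪normalVec q i, q i⟫ + ⟪∑ i, normalVec q i, xb⟫ := by
      rw [sum_inner, ← Finset.sum_add_distrib]
      congr 1; ext i
      rw [inner_add_right]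
    rw [this, sum_normalVec, inner_zero_left, add_zero]
  have htau : ∀ i, ⟪normalVec q i, a i⟫ = ⟪normalVec q i, Q i⟫ := by
    have h1 : ∀ i, 0 ≤ ⟪normalVec q i, a i⟫ - ⟪normalVec q i, Q i⟫ := by
      intro i
      have := hamax i (Q i) (hmemK i)
      linarith
    have h2 : ∑ i, (⟪normalVec q i, a i⟫ - ⟪normalVec q i, Q i⟫) ≤ 0 := by
      rw [Finset.sum_sub_distrib]
      have h3 := hcertnu a haK
      rw [hsumQ]
      linarith
    have h4 : ∑ i, (⟪normalVec q i, a i⟫ - ⟪normalVec q i, Q i⟫) = 0 :=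
      le_antisymm h2 (Finset.sum_nonneg fun i _ => h1 i)
    intro i
    have h5 := (Finset.sum_eq_zero_iff_of_nonneg (fun i _ => h1 i)).1 h4 i (Finset.mem_univ i)
    linarith
  refine ⟨Q, ⟨hm, ?_, fun i => hmemK i, ?_⟩, polyLength_translate q xb⟩
  · intro i hcon
    apply hedge i
    have : q (i+1) + xb = q i + xb := hcon
    exact add_right_cancel this
  · intro i
    refine ⟨by rw [htrans i]; exact hnu i, ?_⟩
    intro x hx
    rw [htrans i]
    have h1 : ⟪x - Q i, normalVec q i⟫ = ⟪normalVec q i, x⟫ - ⟪normalVec q i, Q i⟫ := by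
      rw [real_inner_comm, inner_sub_right]
    rw [h1, ← htau i]
    have := hamax i x hx
    linarith

/-- Fin index bookkeeping. -/
lemma fin_neg_one {m₁ : ℕ} : Fin.last (m₁ + 1) = (-1 : Fin (m₁ + 2)) := by
  apply Fin.ext
  simp [Fin.neg_def, Fin.last]

lemma fin_castSucc_last {m₁ : ℕ} :
    ((Fin.last m₁).castSucc : Fin (m₁ + 2)) = Fin.last (m₁ + 1) - 1 := by
  apply Fin.ext
  rw [Fin.sub_def]
  have h1 : ((1 : Fin (m₁ + 2))).val = 1 := by
    rw [Fin.val_one']; exact Nat.mod_eq_of_lt (by omega)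
  simp [Fin.last, h1]
  have h2 : (m₁ + 1 + (m₁ + 1)) = (m₁ + 1 + 1) + m₁ := by omega
  rw [h2, Nat.add_mod_left, Nat.mod_eq_of_lt (by omega)]

/-- Main lemma: any non-fitting closed polygon admits a billiard trajectory on `K`
of at most the same length. -/
lemma exists_billiard_of_nonFit {K : Set (Euc n)} (hK : IsConvexBody K) :
    ∀ (m : ℕ) (hm : NeZero m) (p : Fin m → Euc n), NonFit K p →
      ∃ (m' : ℕ) (hm' : NeZero m') (Q : Fin m' → Euc n),
        @IsBilliard n m' hm' K Q ∧ @polyLength n m' hm' Q ≤ @polyLength n m hm p := by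
  intro m
  induction m using Nat.strong_induction_on with
  | _ m IH =>
  intro hm p hNF
  match m, hm, p, hNF, IH with
  | 0, hm, p, hNF, IH => exact absurd rfl hm.out
  | 1, hm, p, hNF, IH =>
    exfalso
    obtain ⟨z, hz⟩ := hK.2.2
    refine hNF ⟨z - p 0, fun i => ?_⟩
    have hi : i = 0 := Subsingleton.elim i 0
    rw [hi, show p 0 + (z - p 0) = z from by abel]
    exact hz
  | (m₁ + 2), hm, p, hNF, IH =>
    obtain ⟨q, hqNF, hqle, hqmin⟩ := exists_min_nonFit hK hNF
    by_cases hdup : ∃ i, q (i + 1) = q i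
    · -- delete a duplicated vertex
      obtain ⟨i₀, hi₀⟩ := hdup
      set r : Fin (m₁ + 2) → Euc n := rot q (i₀ + 2) with hr
      have hrNF : NonFit K r := nonFit_rot _ hqNF
      have hrlen : polyLength r = polyLength q := polyLength_rot q _
      have hidx1 : Fin.last (m₁ + 1) + (i₀ + 2) = i₀ + 1 := by
        rw [fin_neg_one]; open Fin.CommRing in ring
      have hidx2 : ((Fin.last m₁).castSucc : Fin (m₁ + 2)) + (i₀ + 2) = i₀ := by
        rw [fin_castSucc_last, fin_neg_one]; open Fin.CommRing in ring
      have hseg : r (Fin.last (m₁ + 1)) ∈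
          segment ℝ (r (Fin.last m₁).castSucc) (r (0 : Fin (m₁+1)).castSucc) := by
        have h1 : r (Fin.last (m₁ + 1)) = q (i₀ + 1) := by rw [hr]; unfold rot; rw [hidx1]
        have h2 : r (Fin.last m₁).castSucc = q i₀ := by rw [hr]; unfold rot; rw [hidx2]
        rw [h1, h2, hi₀]
        exact left_mem_segment ℝ _ _
      have hNF' : NonFit K (fun j : Fin (m₁ + 1) => r j.castSucc) :=
        nonFit_delete hK.2.1 hseg hrNF
      obtain ⟨m', hm', Q, hQ, hQlen⟩ :=
        IH (m₁ + 1) (by omega) inferInstance (fun j : Fin (m₁ + 1) => r j.castSucc) hNF'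
      refine ⟨m', hm', Q, hQ, ?_⟩
      calc @polyLength n m' hm' Q ≤ polyLength (fun j : Fin (m₁ + 1) => r j.castSucc) := hQlen
        _ ≤ polyLength r := polyLength_delete r
        _ = polyLength q := hrlen
        _ ≤ polyLength p := hqle
    · push_neg at hdup
      by_cases hstr : ∃ i, normalVec q i = 0
      · -- delete a straight vertex
        obtain ⟨i₀, hi₀⟩ := hstr
        set r : Fin (m₁ + 2) → Euc n := rot q (i₀ + 1) with hr
        have hrNF : NonFit K r := nonFit_rot _ hqNF
        have hrlen : polyLength r = polyLength q := polyLength_rot q _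
        have hidx1 : Fin.last (m₁ + 1) + (i₀ + 1) = i₀ := by
          rw [fin_neg_one]; open Fin.CommRing in ring
        have hidx2 : ((Fin.last m₁).castSucc : Fin (m₁ + 2)) + (i₀ + 1) = i₀ - 1 := by
          rw [fin_castSucc_last, fin_neg_one]; open Fin.CommRing in ring
        have hidx3 : ((0 : Fin (m₁ + 1)).castSucc : Fin (m₁ + 2)) + (i₀ + 1) = i₀ + 1 := by
          have : ((0 : Fin (m₁ + 1)).castSucc : Fin (m₁ + 2)) = 0 := rfl
          rw [this, zero_add]
      -- the straight vertex lies on the segment between its neighbours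
        have hmid : q i₀ ∈ segment ℝ (q (i₀ - 1)) (q (i₀ + 1)) := by
          have hidx4 : (i₀ - 1) + 1 = i₀ := sub_add_cancel i₀ 1
          set e : Euc n := q i₀ - q (i₀ - 1) with he_def
          set f : Euc n := q (i₀ + 1) - q i₀ with hf_def
          have he : e ≠ 0 := by
            have h := hdup (i₀ - 1)
            rw [hidx4] at h
            rw [he_def]
            exact sub_ne_zero_of_ne h
          have hf : f ≠ 0 := sub_ne_zero_of_ne (hdup i₀)
          have hu : dir q (i₀ - 1) = dir q i₀ := by
            have h := hi₀
            unfold normalVec at h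
            exact sub_eq_zero.1 h
          have hu' : ‖e‖⁻¹ • e = ‖f‖⁻¹ • f := by
            have h1 : dir q (i₀ - 1) = ‖e‖⁻¹ • e := by
              unfold dir
              rw [hidx4, ← he_def]
            have h2 : dir q i₀ = ‖f‖⁻¹ • f := by
              unfold dir
              rw [← hf_def]
            rw [← h1, ← h2, hu]
          have hef : ‖f‖ • e = ‖e‖ • f := by
            have hne : ‖e‖ ≠ 0 := norm_ne_zero_iff.2 he
            have hnf : ‖f‖ ≠ 0 := norm_ne_zero_iff.2 hf
            have h := congrArg (fun v : Euc n => (‖e‖ * ‖f‖) • v) hu'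
            simp only [smul_smul] at h
            rw [show ‖e‖ * ‖f‖ * ‖e‖⁻¹ = ‖f‖ from by
                rw [mul_comm ‖e‖ ‖f‖, mul_assoc, mul_inv_cancel₀ hne, mul_one],
              show ‖e‖ * ‖f‖ * ‖f‖⁻¹ = ‖e‖ from by
                rw [mul_assoc, mul_inv_cancel₀ hnf, mul_one]] at h
            exact h
          have hS : (0:ℝ) < ‖e‖ + ‖f‖ := by
            have := norm_pos_iff.2 he
            have := norm_nonneg f
            linarith
          refine ⟨‖f‖ / (‖e‖ + ‖f‖), ‖e‖ / (‖e‖ + ‖f‖), by positivity, by positivity, ?_, ?_⟩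
          · rw [← add_div, add_comm ‖f‖ ‖e‖, div_self hS.ne']
          · have h1 : q (i₀ - 1) = q i₀ - e := by rw [he_def]; abel
            have h2 : q (i₀ + 1) = q i₀ + f := by rw [hf_def]; abel
            rw [h1, h2, smul_sub, smul_add]
            have h3 : (‖f‖ / (‖e‖ + ‖f‖)) • q i₀ + (‖e‖ / (‖e‖ + ‖f‖)) • q i₀ = q i₀ := by
              rw [← add_smul, ← add_div, show ‖f‖ + ‖e‖ = ‖e‖ + ‖f‖ from add_comm _ _,
                div_self hS.ne', one_smul]
            have h4 : (‖f‖ / (‖e‖ + ‖f‖)) • e = (‖e‖ / (‖e‖ + ‖f‖)) • f := by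
              rw [div_eq_inv_mul, div_eq_inv_mul, mul_smul, mul_smul, hef]
            calc (‖f‖ / (‖e‖ + ‖f‖)) • q i₀ - (‖f‖ / (‖e‖ + ‖f‖)) • e
                  + ((‖e‖ / (‖e‖ + ‖f‖)) • q i₀ + (‖e‖ / (‖e‖ + ‖f‖)) • f)
                = ((‖f‖ / (‖e‖ + ‖f‖)) • q i₀ + (‖e‖ / (‖e‖ + ‖f‖)) • q i₀)
                  + ((‖e‖ / (‖e‖ + ‖f‖)) • f - (‖f‖ / (‖e‖ + ‖f‖)) • e) := by abel
              _ = q i₀ + 0 := by rw [h3, ← h4, sub_self]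
              _ = q i₀ := add_zero _
        have hseg : r (Fin.last (m₁ + 1)) ∈
            segment ℝ (r (Fin.last m₁).castSucc) (r (0 : Fin (m₁+1)).castSucc) := by
          have h1 : r (Fin.last (m₁ + 1)) = q i₀ := by rw [hr]; unfold rot; rw [hidx1]
          have h2 : r (Fin.last m₁).castSucc = q (i₀ - 1) := by rw [hr]; unfold rot; rw [hidx2]
          have h3 : r (0 : Fin (m₁+1)).castSucc = q (i₀ + 1) := by rw [hr]; unfold rot; rw [hidx3]
          rw [h1, h2, h3]
          exact hmid
        have hNF' : NonFit K (fun j : Fin (m₁ + 1) => r j.castSucc) :=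
          nonFit_delete hK.2.1 hseg hrNF
        obtain ⟨m', hm', Q, hQ, hQlen⟩ :=
          IH (m₁ + 1) (by omega) inferInstance (fun j : Fin (m₁ + 1) => r j.castSucc) hNF'
        refine ⟨m', hm', Q, hQ, ?_⟩
        calc @polyLength n m' hm' Q ≤ polyLength (fun j : Fin (m₁ + 1) => r j.castSucc) := hQlen
          _ ≤ polyLength r := polyLength_delete r
          _ = polyLength q := hrlen
          _ ≤ polyLength p := hqle
      · -- nondegenerate minimizer: it is a billiard trajectory
        push_neg at hstr
        obtain ⟨Q, hQ, hQlen⟩ := min_is_billiard hK (by omega) hqNF hqmin hdup hstr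
        exact ⟨m₁ + 2, inferInstance, Q, hQ, by rw [hQlen]; exact hqle⟩

/-- If the support function values of the normal fan of `q` over `K` sum to at most `S`,
then `K` has a billiard trajectory of length at most `S`. -/
lemma muP_le_of_fan [NeZero m] {K : Set (Euc n)} (hK : IsConvexBody K)
    (q : Fin m → Euc n) (hedge : ∀ i, q (i + 1) ≠ q i) (hν0 : normalVec q 0 ≠ 0)
    (S : ℝ) (hS0 : 0 ≤ S)
    (hub : ∀ y : Fin m → Euc n, (∀ i, y i ∈ K) → ∑ i, ⟪normalVec q i, y i⟫ ≤ S) :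
    muP K ≤ S := by
  have hlpos : 0 < polyLength q := by
    apply Finset.sum_pos' (fun i _ => norm_nonneg _)
    exact ⟨0, Finset.mem_univ _, norm_pos_iff.2 (sub_ne_zero_of_ne (hedge 0))⟩
  set sc : ℝ := S / polyLength q with hsc
  set P : Fin m → Euc n := fun i => sc • q i with hP
  have hsum : ∑ i, ⟪normalVec q i, P i⟫ = S := by
    have h2 : ∑ i, ⟪normalVec q i, P i⟫ = sc * ∑ i, ⟪normalVec q i, q i⟫ := by
      rw [Finset.mul_sum]
      congr 1; ext i
      rw [hP]
      exact real_inner_smul_right _ _ _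
    rw [h2, sum_inner_normal q hedge, hsc, div_mul_cancel₀ _ hlpos.ne']
  have hcert : Cert K (normalVec q) P := by
    refine ⟨⟨0, hν0⟩, sum_normalVec q, fun y hy => ?_⟩
    rw [hsum]
    exact hub y hy
  have hNF : NonFit K P := hcert.nonFit
  have hlen : polyLength P = S := by
    rw [hP, polyLength_smul q (div_nonneg hS0 hlpos.le)]
    exact div_mul_cancel₀ _ hlpos.ne'
  obtain ⟨m', hm', Q, hQ, hQlen⟩ := exists_billiard_of_nonFit hK m inferInstance P hNF
  have hbdd : BddBelow {L : ℝ | ∃ (m : ℕ) (hm : NeZero m) (q : Fin m → Euc n),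
      @IsBilliard n m hm K q ∧ @polyLength n m hm q = L} := by
    refine ⟨0, fun L hL => ?_⟩
    obtain ⟨m'', hm'', q'', hb, hl⟩ := hL
    rw [← hl]
    exact @polyLength_nonneg n m'' hm'' q''
  have hmem : @polyLength n m' hm' Q ∈ {L : ℝ | ∃ (m : ℕ) (hm : NeZero m) (q : Fin m → Euc n),
      @IsBilliard n m hm K q ∧ @polyLength n m hm q = L} := ⟨m', hm', Q, hQ, rfl⟩
  calc muP K ≤ @polyLength n m' hm' Q := csInf_le hbdd hmem
    _ ≤ polyLength P := hQlen
    _ = S := hlen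

end Stmt4Aux

open Stmt4Aux in
theorem stmt4 {n : ℕ} (K₁ K₂ : Set (Euc n))
    (hK₁ : IsConvexBody K₁) (hK₂ : IsConvexBody K₂)
    (hex₁ : ∃ (m : ℕ) (hm : NeZero m) (q : Fin m → Euc n), @IsBilliard n m hm K₁ q)
    (hex₂ : ∃ (m : ℕ) (hm : NeZero m) (q : Fin m → Euc n), @IsBilliard n m hm K₂ q) :
    ∀ (m : ℕ) [NeZero m] (q : Fin m → Euc n),
      IsBilliard (K₁ + K₂) q → muP K₁ + muP K₂ ≤ polyLength q := by
  intro m _ q hq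
  obtain ⟨hm2, hedge, hmem, hrefl⟩ := hq
  -- support maximizers over K₁ and K₂
  have hmax : ∀ (K : Set (Euc n)), IsConvexBody K →
      ∀ i : Fin m, ∃ a ∈ K, ∀ y ∈ K, ⟪normalVec q i, y⟫ ≤ ⟪normalVec q i, a⟫ := by
    intro K hK i
    obtain ⟨z, hz⟩ := hK.2.2
    obtain ⟨a, haK, hamax⟩ := hK.1.exists_isMaxOn ⟨z, interior_subset hz⟩
      (((continuous_const.inner continuous_id).continuousOn) :
        ContinuousOn (fun y : Euc n => ⟪normalVec q i, y⟫) K)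
    exact ⟨a, haK, fun y hy => hamax hy⟩
  choose a haK hamax using hmax K₁ hK₁
  choose b hbK hbmax using hmax K₂ hK₂
  have hkey : ∀ i, ⟪normalVec q i, a i⟫ + ⟪normalVec q i, b i⟫ = ⟪normalVec q i, q i⟫ := by
    intro i
    obtain ⟨c, hc, d, hd, hcd⟩ := Set.mem_add.1 (hmem i)
    have h1 : ⟪normalVec q i, q i⟫ ≤ ⟪normalVec q i, a i⟫ + ⟪normalVec q i, b i⟫ := by
      rw [← hcd, inner_add_right]
      exact add_le_add (hamax i c hc) (hbmax i d hd)
    have h2 := (hrefl i).2 (a i + b i) (Set.add_mem_add (haK i) (hbK i))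
    have h3 : ⟪normalVec q i, a i + b i⟫ - ⟪normalVec q i, q i⟫ ≤ 0 := by
      have e : ⟪a i + b i - q i, normalVec q i⟫
          = ⟪normalVec q i, a i + b i⟫ - ⟪normalVec q i, q i⟫ := by
        rw [real_inner_comm, inner_sub_right]
      rw [← e]
      exact h2
    rw [inner_add_right] at h3
    linarith
  set S₁ : ℝ := ∑ i, ⟪normalVec q i, a i⟫ with hS₁
  set S₂ : ℝ := ∑ i, ⟪normalVec q i, b i⟫ with hS₂
  have hS : S₁ + S₂ = polyLength q := by
    rw [hS₁, hS₂, ← Finset.sum_add_distrib,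
      Finset.sum_congr rfl (fun i _ => hkey i), sum_inner_normal q hedge]
  have hSnn : ∀ (K : Set (Euc n)) (hK : IsConvexBody K) (aa : Fin m → Euc n),
      (∀ i, aa i ∈ K) → (∀ i, ∀ y ∈ K, ⟪normalVec q i, y⟫ ≤ ⟪normalVec q i, aa i⟫) →
      0 ≤ ∑ i, ⟪normalVec q i, aa i⟫ := by
    intro K hK aa haaK haamax
    obtain ⟨z, hz⟩ := hK.2.2
    have h0 : ∑ i, ⟪normalVec q i, z⟫ = 0 := by
      rw [← sum_inner, sum_normalVec, inner_zero_left]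
    calc (0:ℝ) = ∑ i, ⟪normalVec q i, z⟫ := h0.symm
      _ ≤ ∑ i, ⟪normalVec q i, aa i⟫ :=
          Finset.sum_le_sum fun i _ => haamax i z (interior_subset hz)
  have hmu₁ : muP K₁ ≤ S₁ := by
    apply muP_le_of_fan hK₁ q hedge (hrefl 0).1 S₁ (hSnn K₁ hK₁ a haK hamax)
    intro y hy
    exact Finset.sum_le_sum fun i _ => hamax i (y i) (hy i)
  have hmu₂ : muP K₂ ≤ S₂ := by
    apply muP_le_of_fan hK₂ q hedge (hrefl 0).1 S₂ (hSnn K₂ hK₂ b hbK hbmax)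
    intro y hy
    exact Finset.sum_le_sum fun i _ => hbmax i (y i) (hy i)
  linarith [hmu₁, hmu₂, hS.ge, hS.le]
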